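/- If λ covers μ in the dominance order on partitions of n, then there exist indices i < j such that λ_i = μ_i + 1, λ_j = μ_j − 1, and λ_k = μ_k for all k ≠ i, j. -/

import Mathlib

/-- The parts of a partition sorted in weakly decreasing order. -/
def partsList {n : ℕ} (p : Nat.Partition n) : List ℕ := p.parts.sort (· ≥ ·)

/-- The `i`-th part (1-indexed) of a partition, with the convention that
`part p i = 0` for `i` beyond the length. -/
def part {n : ℕ} (p : Nat.Partition n) (i : ℕ) : ℕ := (partsList p).getD (i - 1) 0

/-- The partial sum `λ₁ + ⋯ + λ_j`. -/
def psum {n : ℕ} (p : Nat.Partition n) (j : ℕ) : ℕ := ∑ i ∈ Finset.range j, part p (i + 1)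

/-- Dominance ordering: `Dominates l m` means `l ≥ m`, i.e. every partial sum of `l`
is at least the corresponding partial sum of `m`. -/
def Dominates {n : ℕ} (l m : Nat.Partition n) : Prop := ∀ j, psum m j ≤ psum l j

/-- Strict dominance: `l > m`. -/
def SDom {n : ℕ} (l m : Nat.Partition n) : Prop := Dominates l m ∧ l ≠ m

/-- The number of (nonzero) parts of a partition. -/
def plen {n : ℕ} (p : Nat.Partition n) : ℕ := Multiset.card p.parts

/-- `l` covers `m` in the dominance order: `l > m` and nothing strictly in between. -/
def Covers {n : ℕ} (l m : Nat.Partition n) : Prop :=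
  SDom l m ∧ ¬ ∃ ν : Nat.Partition n, SDom l ν ∧ SDom ν m

section Helpers

lemma partsList_sorted {n : ℕ} (p : Nat.Partition n) : (partsList p).Pairwise (· ≥ ·) :=
  p.parts.pairwise_sort _

lemma partsList_coe {n : ℕ} (p : Nat.Partition n) : (↑(partsList p) : Multiset ℕ) = p.parts :=
  p.parts.sort_eq _

lemma partsList_pos {n : ℕ} (p : Nat.Partition n) {x : ℕ} (hx : x ∈ partsList p) : 0 < x :=
  p.parts_pos (by rw [← partsList_coe p]; exact_mod_cast hx)

lemma partsList_sum {n : ℕ} (p : Nat.Partition n) : (partsList p).sum = n := by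
  have := p.parts_sum
  rw [← partsList_coe p] at this
  simpa using this

lemma getD_anti {L : List ℕ} (hL : L.Pairwise (· ≥ ·)) {a b : ℕ} (hab : a ≤ b) :
    L.getD b 0 ≤ L.getD a 0 := by
  rcases Nat.lt_or_ge b L.length with hb | hb
  · have ha : a < L.length := lt_of_le_of_lt hab hb
    rw [L.getD_eq_getElem 0 hb, L.getD_eq_getElem 0 ha]
    exact hL.rel_get_of_le (a := ⟨a, ha⟩) (b := ⟨b, hb⟩) hab
  · rw [L.getD_eq_default 0 hb]; exact Nat.zero_le _

lemma part_anti {n : ℕ} (p : Nat.Partition n) {a b : ℕ} (h : a ≤ b) : part p b ≤ part p a :=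
  getD_anti (partsList_sorted p) (by omega)

lemma part_len {n : ℕ} (p : Nat.Partition n) {k : ℕ} (h : part p k ≠ 0) :
    k - 1 < (partsList p).length := by
  by_contra hc
  exact h (List.getD_eq_default _ _ (by omega))

lemma psum_succ {n : ℕ} (p : Nat.Partition n) (k : ℕ) :
    psum p (k+1) = psum p k + part p (k+1) := Finset.sum_range_succ _ _

lemma sum_take_eq (L : List ℕ) (k : ℕ) : (L.take k).sum = ∑ t ∈ Finset.range k, L.getD t 0 := by
  induction k with
  | zero => simp
  | succ k ih =>
    rw [Finset.sum_range_succ, ← ih, List.take_succ]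
    rcases Nat.lt_or_ge k L.length with h | h
    · rw [L.getD_eq_getElem 0 h, List.getElem?_eq_getElem h]
      simp only [Option.toList_some, List.sum_append, List.sum_cons, List.sum_nil, Nat.add_zero]
    · rw [L.getD_eq_default 0 h, List.getElem?_eq_none h]
      simp

lemma psum_eq_take {n : ℕ} (p : Nat.Partition n) (k : ℕ) :
    psum p k = ((partsList p).take k).sum := by
  rw [sum_take_eq]
  refine Finset.sum_congr rfl fun t _ => ?_
  simp [part]

lemma psum_large {n : ℕ} (p : Nat.Partition n) {k : ℕ} (h : (partsList p).length ≤ k) :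
    psum p k = n := by
  rw [psum_eq_take, List.take_of_length_le h, partsList_sum]

lemma sorted_of_adjacent (A : List ℕ) (h : ∀ t, A.getD (t+1) 0 ≤ A.getD t 0) :
    A.Pairwise (· ≥ ·) := by
  rw [← List.isChain_iff_pairwise, List.isChain_iff_getElem]
  intro i hi
  have := h i
  rwa [A.getD_eq_getElem 0 (by omega), A.getD_eq_getElem 0 (by omega)] at this

lemma filter_sum (A : List ℕ) : (A.filter (· ≠ 0)).sum = A.sum := by
  induction A with
  | nil => simp
  | cons a A ih =>
    by_cases h : a = 0 <;>
      simp [h, List.filter_cons, show (fun x => !decide (x = 0)) = (fun x => decide (x ≠ 0)) from by funext x; simp, ih]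

lemma getD_zero_of_all_zero {A : List ℕ} (h : ∀ x ∈ A, x = 0) (t : ℕ) : A.getD t 0 = 0 := by
  rcases Nat.lt_or_ge t A.length with ht | ht
  · rw [A.getD_eq_getElem 0 ht]; exact h _ (List.getElem_mem ht)
  · exact List.getD_eq_default _ _ ht

lemma getD_filter (A : List ℕ) (hA : A.Pairwise (· ≥ ·)) (t : ℕ) :
    (A.filter (· ≠ 0)).getD t 0 = A.getD t 0 := by
  induction A generalizing t with
  | nil => rfl
  | cons a A ih =>
    have h1 : A.Pairwise (· ≥ ·) := hA.of_cons
    by_cases h : a = 0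
    · subst h
      have hz : ∀ x ∈ (0 : ℕ) :: A, x = 0 := by
        intro x hx
        rcases List.mem_cons.mp hx with rfl | hx
        · rfl
        · exact Nat.le_zero.mp (List.rel_of_pairwise_cons hA hx)
      have hnil : ((0 : ℕ) :: A).filter (· ≠ 0) = [] := by
        rw [List.filter_eq_nil_iff]
        intro x hx
        simp [hz x hx]
      rw [hnil, getD_zero_of_all_zero hz t]
      rfl
    · rw [List.filter_cons_of_pos (by simp [h])]
      cases t with
      | zero => rfl
      | succ t => simpa using ih h1 t

/-- Build a partition from a sorted list of naturals summing to `n`. -/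
def ofList {n : ℕ} (A : List ℕ) (hsum : A.sum = n) : Nat.Partition n where
  parts := ↑(A.filter (· ≠ 0))
  parts_pos := by
    intro i hi
    have : i ∈ A.filter (· ≠ 0) := by exact_mod_cast hi
    have := List.of_mem_filter this
    simp at this
    omega
  parts_sum := by
    have : ((A.filter (· ≠ 0) : List ℕ) : Multiset ℕ).sum = (A.filter (· ≠ 0)).sum := by simp
    rw [this, filter_sum, hsum]

lemma partsList_ofList {n : ℕ} (A : List ℕ) (hA : A.Pairwise (· ≥ ·)) (hs : A.sum = n) :
    partsList (ofList A hs) = A.filter (· ≠ 0) := by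
  refine List.Perm.eq_of_pairwise' (partsList_sorted _) (hA.filter _) ?_
  apply Multiset.coe_eq_coe.mp
  rw [partsList_coe]
  rfl

lemma part_ofList {n : ℕ} (A : List ℕ) (hA : A.Pairwise (· ≥ ·)) (hs : A.sum = n) (k : ℕ) :
    part (ofList A hs) k = A.getD (k-1) 0 := by
  rw [part, partsList_ofList A hA hs, getD_filter A hA]

lemma eq_of_getD (L M : List ℕ) (hL : ∀ x ∈ L, 0 < x) (hM : ∀ x ∈ M, 0 < x)
    (h : ∀ t, L.getD t 0 = M.getD t 0) : L = M := by
  have hlen : L.length = M.length := by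
    rcases Nat.lt_trichotomy L.length M.length with h1 | h1 | h1
    · have := h L.length
      rw [List.getD_eq_default _ _ le_rfl, M.getD_eq_getElem 0 h1] at this
      exact absurd this.symm (hM _ (M.getElem_mem h1)).ne'
    · exact h1
    · have := h M.length
      rw [List.getD_eq_default M _ le_rfl, L.getD_eq_getElem 0 h1] at this
      exact absurd this (hL _ (L.getElem_mem h1)).ne'
  refine List.ext_getElem hlen fun i h1 h2 => ?_
  have := h i
  rwa [L.getD_eq_getElem 0 h1, M.getD_eq_getElem 0 h2] at this

lemma part_congr {n : ℕ} {p q : Nat.Partition n} (h : p = q) (k : ℕ) : part p k = part q k := by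
  rw [h]

lemma eq_of_part_eq {n : ℕ} (p q : Nat.Partition n) (h : ∀ k, 1 ≤ k → part p k = part q k) :
    p = q := by
  have : partsList p = partsList q := by
    refine eq_of_getD _ _ (fun x hx => partsList_pos p hx) (fun x hx => partsList_pos q hx)
      fun t => ?_
    have := h (t+1) (by omega)
    simpa [part] using this
  apply Nat.Partition.ext
  rw [← partsList_coe p, ← partsList_coe q, this]

end Helpers

/-- If `λ` covers `μ` in the dominance order on partitions of `n`, then there are
indices `i < j` with `λ_i = μ_i + 1`, `λ_j = μ_j - 1` and `λ_k = μ_k` for `k ≠ i, j`. -/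
theorem cover_characterization (n : ℕ) (l m : Nat.Partition n) (h : Covers l m) :
    ∃ i j : ℕ, 1 ≤ i ∧ i < j ∧
      part l i = part m i + 1 ∧
      part l j + 1 = part m j ∧
      ∀ k, 1 ≤ k → k ≠ i → k ≠ j → part l k = part m k := by
  obtain ⟨⟨hdom, hne⟩, hnex⟩ := h
  -- the first index where the partitions differ
  have hex : ∃ k, 1 ≤ k ∧ part l k ≠ part m k := by
    by_contra hc
    push_neg at hc
    exact hne (eq_of_part_eq l m hc)
  obtain ⟨i, hi1, hi2, hmin⟩ :
      ∃ i, 1 ≤ i ∧ part l i ≠ part m i ∧ ∀ k, 1 ≤ k → k < i → part l k = part m k := by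
    refine ⟨Nat.find hex, (Nat.find_spec hex).1, (Nat.find_spec hex).2, fun k h1 h2 => ?_⟩
    by_contra hc
    exact Nat.find_min hex h2 ⟨h1, hc⟩
  -- partial sums agree strictly below i
  have hps : ∀ t, t < i → psum l t = psum m t := by
    intro t ht
    refine Finset.sum_congr rfl fun s hs => ?_
    exact hmin (s+1) (by omega) (by simp at hs; omega)
  -- λ_i > μ_i
  have hli : part m i + 1 ≤ part l i := by
    have h1 : psum l i = psum l (i-1) + part l i := by
      have := psum_succ l (i-1)
      rwa [show i - 1 + 1 = i by omega] at this
    have h2 : psum m i = psum m (i-1) + part m i := by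
      have := psum_succ m (i-1)
      rwa [show i - 1 + 1 = i by omega] at this
    have h3 := hps (i-1) (by omega)
    have h4 := hdom i
    omega
  -- the first index above i where partial sums agree again
  have jex : ∃ k, i < k ∧ psum l k = psum m k := by
    refine ⟨max (partsList l).length (partsList m).length + i + 1, by omega, ?_⟩
    rw [psum_large l (by omega), psum_large m (by omega)]
  obtain ⟨j, hji, hjeq, hjmin⟩ :
      ∃ j, i < j ∧ psum l j = psum m j ∧ ∀ k, i < k → k < j → psum l k ≠ psum m k := by
    refine ⟨Nat.find jex, (Nat.find_spec jex).1, (Nat.find_spec jex).2, fun k h1 h2 hc => ?_⟩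
    exact Nat.find_min jex h2 ⟨h1, hc⟩
  -- strict inequality of partial sums on [i, j)
  have hdi : psum m i + 1 ≤ psum l i := by
    have h3 : psum l i = psum l (i-1) + part l i := by
      have := psum_succ l (i-1); rwa [show i - 1 + 1 = i by omega] at this
    have h4 : psum m i = psum m (i-1) + part m i := by
      have := psum_succ m (i-1); rwa [show i - 1 + 1 = i by omega] at this
    have h5 := hps (i-1) (by omega)
    omega
  have hd : ∀ k, i ≤ k → k < j → psum m k + 1 ≤ psum l k := by
    intro k h1 h2
    rcases Nat.eq_or_lt_of_le h1 with h1 | h1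
    · rw [← h1]
      exact hdi
    · have := hjmin k h1 h2
      have := hdom k
      omega
  -- μ_j > λ_j
  have hmj : part l j + 1 ≤ part m j := by
    have h3 : psum l j = psum l (j-1) + part l j := by
      have := psum_succ l (j-1); rwa [show j - 1 + 1 = j by omega] at this
    have h4 : psum m j = psum m (j-1) + part m j := by
      have := psum_succ m (j-1); rwa [show j - 1 + 1 = j by omega] at this
    have h5 := hd (j-1) (by omega) (by omega)
    omega
  have hmjpos : 1 ≤ part m j := by omega
  have hjlen : j - 1 < (partsList m).length := part_len m (by omega)
  have hilen : i - 1 < (partsList m).length := by omega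
  have hjle : j ≤ (partsList m).length := by omega
  -- μ_{j+1} ≤ λ_{j+1}
  have hj1 : part m (j+1) ≤ part l (j+1) := by
    have h1 := psum_succ l j
    have h2 := psum_succ m j
    have h3 := hdom (j+1)
    omega
  -- the parts of the intermediate partition ν
  obtain ⟨aPart, ha⟩ : ∃ f : ℕ → ℕ, ∀ k,
      f k = if k = i then part m i + 1 else if k = j then part m j - 1 else part m k :=
    ⟨_, fun _ => rfl⟩
  obtain ⟨A, hA⟩ : ∃ A : List ℕ,
      A = (List.range (partsList m).length).map (fun t => aPart (t+1)) := ⟨_, rfl⟩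
  have hAget : ∀ t, A.getD t 0 = aPart (t+1) := by
    intro t
    rcases Nat.lt_or_ge t (partsList m).length with ht | ht
    · rw [A.getD_eq_getElem 0 (by simpa [hA] using ht)]
      simp [hA]
    · rw [A.getD_eq_default 0 (by simpa [hA] using ht)]
      have h3 : part m (t+1) = 0 := List.getD_eq_default _ _ (by omega)
      rw [ha, if_neg (by omega), if_neg (by omega), h3]
  -- adjacent monotonicity of aPart
  have hadj : ∀ k, 1 ≤ k → aPart (k+1) ≤ aPart k := by
    intro k hk
    rw [ha (k+1), ha k]
    by_cases h1 : k = i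
    · subst h1
      rw [if_neg (by omega : ¬ k + 1 = k), if_pos rfl]
      by_cases h3 : k + 1 = j
      · rw [if_pos h3, ← h3]
        have := part_anti m ((by omega : k ≤ k + 1))
        omega
      · rw [if_neg h3]
        have := part_anti m ((by omega : k ≤ k + 1))
        omega
    · by_cases h2 : k = j
      · subst h2
        rw [if_neg h1, if_pos rfl, if_neg (by omega : ¬ k + 1 = i),
          if_neg (by omega : ¬ k + 1 = k)]
        have h5 := part_anti l ((by omega : k ≤ k + 1))
        omega
      · rw [if_neg h1, if_neg h2]
        by_cases h3 : k + 1 = i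
        · subst h3
          rw [if_pos rfl]
          have h5 := hmin k hk (by omega)
          have h6 := part_anti l ((by omega : k ≤ k + 1))
          omega
        · rw [if_neg h3]
          by_cases h4 : k + 1 = j
          · subst h4
            rw [if_pos rfl]
            have h5 := part_anti m ((by omega : k ≤ k + 1))
            omega
          · rw [if_neg h4]
            exact part_anti m ((by omega : k ≤ k + 1))
  have hsorted : A.Pairwise (· ≥ ·) := by
    refine sorted_of_adjacent _ fun t => ?_
    rw [hAget, hAget]
    exact hadj (t+1) (by omega)
  -- A sums to n
  have hAsum : A.sum = n := by
    have h1 : A.sum = ∑ t ∈ Finset.range (partsList m).length, A.getD t 0 := by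
      have h0 := sum_take_eq A A.length
      rw [List.take_length] at h0
      rw [h0]
      congr 1
      simp [hA]
    have h2 : ∀ t ∈ Finset.range (partsList m).length,
        aPart (t+1) + (if t = j - 1 then 1 else 0)
          = part m (t+1) + (if t = i - 1 then 1 else 0) := by
      intro t ht
      rw [ha]
      by_cases e1 : t + 1 = i
      · rw [if_pos e1, if_pos (by omega : t = i - 1), if_neg (by omega : ¬ t = j - 1), e1]
      · rw [if_neg e1, if_neg (by omega : ¬ t = i - 1)]
        by_cases e2 : t + 1 = j
        · rw [if_pos e2, if_pos (by omega : t = j - 1), e2]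
          omega
        · rw [if_neg e2, if_neg (by omega : ¬ t = j - 1)]
    have h3 := Finset.sum_congr rfl h2
    rw [Finset.sum_add_distrib, Finset.sum_add_distrib] at h3
    rw [Finset.sum_ite_eq' (Finset.range (partsList m).length) (j-1) (fun _ => 1)] at h3
    rw [Finset.sum_ite_eq' (Finset.range (partsList m).length) (i-1) (fun _ => 1)] at h3
    rw [if_pos (Finset.mem_range.mpr hjlen), if_pos (Finset.mem_range.mpr hilen)] at h3
    have h4 : ∑ t ∈ Finset.range (partsList m).length, part m (t+1) = n :=
      psum_large m le_rfl
    have h5 : ∑ t ∈ Finset.range (partsList m).length, A.getD t 0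
        = ∑ t ∈ Finset.range (partsList m).length, aPart (t+1) :=
      Finset.sum_congr rfl fun t _ => hAget t
    omega
  obtain ⟨ν, hν⟩ : ∃ ν : Nat.Partition n, ν = ofList A hAsum := ⟨_, rfl⟩
  have hνpart : ∀ k, 1 ≤ k → part ν k = aPart k := by
    intro k hk
    rw [hν, part_ofList A hsorted hAsum, hAget (k-1), show k - 1 + 1 = k by omega]
  have hνpsum : ∀ k, psum ν k = psum m k + (if i ≤ k ∧ k < j then 1 else 0) := by
    intro k
    induction k with
    | zero =>
      rw [if_neg (by omega)]
      simp [psum]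
    | succ k ih =>
      rw [psum_succ, psum_succ, ih, hνpart (k+1) (by omega), ha]
      by_cases e1 : k + 1 = i
      · rw [if_pos e1, if_neg (by omega : ¬ (i ≤ k ∧ k < j)),
          if_pos (by omega : i ≤ k + 1 ∧ k + 1 < j), e1]
        omega
      · rw [if_neg e1]
        by_cases e2 : k + 1 = j
        · rw [if_pos e2, if_pos (by omega : i ≤ k ∧ k < j),
            if_neg (by omega : ¬ (i ≤ k + 1 ∧ k + 1 < j)), e2]
          omega
        · rw [if_neg e2]
          by_cases e3 : i ≤ k ∧ k < j
          · rw [if_pos e3, if_pos (by omega : i ≤ k + 1 ∧ k + 1 < j)]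
            omega
          · rw [if_neg e3, if_neg (by omega : ¬ (i ≤ k + 1 ∧ k + 1 < j))]
            omega
  have hdomνm : Dominates ν m := by
    intro k
    rw [hνpsum k]
    split_ifs <;> omega
  have hνm : ν ≠ m := by
    intro e
    have h0 := hνpart i hi1
    rw [e, ha, if_pos rfl] at h0
    omega
  have hdomlν : Dominates l ν := by
    intro k
    rw [hνpsum k]
    split_ifs with hk
    · have := hd k hk.1 hk.2
      omega
    · have := hdom k
      omega
  have hlν : l = ν := by
    by_contra hc
    exact hnex ⟨ν, ⟨hdomlν, hc⟩, ⟨hdomνm, hνm⟩⟩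
  have hkey : ∀ k, 1 ≤ k → part l k = aPart k := by
    intro k hk
    rw [hlν]
    exact hνpart k hk
  refine ⟨i, j, hi1, hji, ?_, ?_, ?_⟩
  · rw [hkey i hi1, ha, if_pos rfl]
  · rw [hkey j (by omega), ha, if_neg (by omega), if_pos rfl]
    omega
  · intro k h1 h2 h3
    rw [hkey k h1, ha, if_neg h2, if_neg h3]
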